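/- Let T > 0 and c ∈ ℝ. Let v : [0,T] → ℂ be continuous, let θ : [0,T] → ℂ be twice continuously differentiable with θ'(T) = 0, and define w(t) = ∫_0^t e^{−ic(t−s)} v(s) ds for t ∈ [0,T]. Then ∫_0^T ( θ(t) w(t) + θ'(t) w'(t) ) dt = ∫_0^T v(s) ( θ'(s) + ∫_s^T ( θ(t) − i c θ'(t) ) e^{−ic(t−s)} dt ) ds. -/

import Mathlib

open Set Complex
open MeasureTheory intervalIntegral


/-- Fubini on the triangle `0 ≤ s ≤ t ≤ T` for a globally continuous integrand. -/
lemma triangle_swap (T : ℝ) (hT : 0 ≤ T) (F : ℝ → ℝ → ℂ)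
    (hF : Continuous (Function.uncurry F)) :
    ∫ t in (0:ℝ)..T, ∫ s in (0:ℝ)..t, F t s = ∫ s in (0:ℝ)..T, ∫ t in s..T, F t s := by
  set μ := volume.restrict (Icc (0:ℝ) T) with hμ
  have hGmeas : MeasurableSet {p : ℝ × ℝ | p.2 ≤ p.1} :=
    measurableSet_le measurable_snd measurable_fst
  set G : ℝ × ℝ → ℂ := Set.indicator {p : ℝ × ℝ | p.2 ≤ p.1} (Function.uncurry F) with hG
  have hprod : μ.prod μ = (volume.prod volume).restrict (Icc (0:ℝ) T ×ˢ Icc (0:ℝ) T) := by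
    rw [hμ, Measure.prod_restrict]
  have hFin : IntegrableOn (Function.uncurry F) (Icc (0:ℝ) T ×ˢ Icc (0:ℝ) T)
      (volume.prod volume) :=
    hF.continuousOn.integrableOn_compact (isCompact_Icc.prod isCompact_Icc)
  have hGint : Integrable G (μ.prod μ) := by
    rw [hprod]
    exact (hFin.indicator hGmeas)
  have hswap := MeasureTheory.integral_integral_swap (f := fun t s => G (t, s))
      (μ := μ) (ν := μ) (by exact hGint)
  have hL : ∫ t in (0:ℝ)..T, ∫ s in (0:ℝ)..t, F t s = ∫ t, (∫ s, G (t, s) ∂μ) ∂μ := by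
    rw [hμ, integral_of_le hT, ← integral_Icc_eq_integral_Ioc]
    refine setIntegral_congr_fun measurableSet_Icc (fun t ht => ?_)
    have h1 : (fun s => G (t, s)) = Set.indicator (Iic t) (F t) := by
      funext s
      simp only [hG, Set.indicator_apply, mem_setOf_eq, mem_Iic, Function.uncurry_apply_pair]
    rw [h1, setIntegral_indicator measurableSet_Iic]
    have h2 : Icc (0:ℝ) T ∩ Iic t = Icc 0 t := by
      ext x
      simp only [mem_inter_iff, mem_Icc, mem_Iic]
      exact ⟨fun h => ⟨h.1.1, h.2⟩, fun h => ⟨⟨h.1, h.2.trans ht.2⟩, h.2⟩⟩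
    rw [h2, integral_of_le ht.1, ← integral_Icc_eq_integral_Ioc]
  have hR : ∫ s in (0:ℝ)..T, ∫ t in s..T, F t s = ∫ s, (∫ t, G (t, s) ∂μ) ∂μ := by
    rw [hμ, integral_of_le hT, ← integral_Icc_eq_integral_Ioc]
    refine setIntegral_congr_fun measurableSet_Icc (fun s hs => ?_)
    have h1 : (fun t => G (t, s)) = Set.indicator (Ici s) (fun t => F t s) := by
      funext t
      simp only [hG, Set.indicator_apply, mem_setOf_eq, mem_Ici, Function.uncurry_apply_pair]
    rw [h1, setIntegral_indicator measurableSet_Ici]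
    have h2 : Icc (0:ℝ) T ∩ Ici s = Icc s T := by
      ext x
      simp only [mem_inter_iff, mem_Icc, mem_Ici]
      exact ⟨fun h => ⟨h.2, h.1.2⟩, fun h => ⟨⟨hs.1.trans h.1, h.2⟩, h.1⟩⟩
    rw [h2, integral_of_le hs.2, ← integral_Icc_eq_integral_Ioc]
  rw [hL, hR, hswap]

/-- Integration-by-parts / Fubini identity: for `θ` twice continuously differentiable on
`[0,T]` with `θ'(T) = 0`, `v` continuous on `[0,T]`, and
`w(t) = ∫_0^t e^{-ic(t-s)} v(s) ds`,
`∫_0^T (θ w + θ' w') dt = ∫_0^T v(s) (θ'(s) + ∫_s^T (θ(t) - i c θ'(t)) e^{-ic(t-s)} dt) ds`. -/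
theorem averaging_identity
    (T : ℝ) (hT : 0 < T) (c : ℝ) (v θ θ' θ'' w w' : ℝ → ℂ)
    (hv : ContinuousOn v (Icc 0 T))
    (hθ : ∀ t ∈ Icc (0 : ℝ) T, HasDerivWithinAt θ (θ' t) (Icc 0 T) t)
    (hθ' : ∀ t ∈ Icc (0 : ℝ) T, HasDerivWithinAt θ' (θ'' t) (Icc 0 T) t)
    (hθ'' : ContinuousOn θ'' (Icc 0 T))
    (hθT : θ' T = 0)
    (hw : ∀ t, w t = ∫ s in (0 : ℝ)..t,
      Complex.exp (-(Complex.I * (c : ℂ) * ((t : ℂ) - (s : ℂ)))) * v s)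
    (hw' : ∀ t ∈ Icc (0 : ℝ) T, HasDerivWithinAt w (w' t) (Icc 0 T) t) :
    (∫ t in (0 : ℝ)..T, (θ t * w t + θ' t * w' t))
      = ∫ s in (0 : ℝ)..T, v s * (θ' s + ∫ t in s..T,
          (θ t - Complex.I * (c : ℂ) * θ' t) *
            Complex.exp (-(Complex.I * (c : ℂ) * ((t : ℂ) - (s : ℂ))))) := by
  have hT' : (0:ℝ) ≤ T := hT.le
  -- continuous extensions
  set V : ℝ → ℂ := IccExtend hT' ((Icc (0:ℝ) T).restrict v) with hVdef
  have hVcont : Continuous V := hv.restrict.Icc_extend'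
  have hVeq : ∀ x ∈ Icc (0:ℝ) T, V x = v x := fun x hx => IccExtend_of_mem hT' _ hx
  have θc : ContinuousOn θ (Icc 0 T) := fun t ht => (hθ t ht).continuousWithinAt
  have θ'c : ContinuousOn θ' (Icc 0 T) := fun t ht => (hθ' t ht).continuousWithinAt
  have hPc : ContinuousOn (fun t => θ t - Complex.I * (c:ℂ) * θ' t) (Icc 0 T) :=
    θc.sub (continuousOn_const.mul θ'c)
  set P : ℝ → ℂ := IccExtend hT'
      ((Icc (0:ℝ) T).restrict (fun t => θ t - Complex.I * (c:ℂ) * θ' t)) with hPdef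
  have hPcont : Continuous P := hPc.restrict.Icc_extend'
  have hPeq : ∀ x ∈ Icc (0:ℝ) T, P x = θ x - Complex.I * (c:ℂ) * θ' x :=
    fun x hx => IccExtend_of_mem hT' _ hx
  -- exponential derivative helper
  have hexp : ∀ (a : ℂ) (t : ℝ), HasDerivAt (fun x : ℝ => Complex.exp (a * x))
      (a * Complex.exp (a * t)) t := by
    intro a t
    have h1 : HasDerivAt (fun x : ℝ => a * (x:ℂ)) a t := by
      simpa using (Complex.ofRealCLM.hasDerivAt (x := t)).const_mul a
    simpa [mul_comm] using h1.cexp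
  -- the primitive g and the modified w
  set g : ℝ → ℂ := fun u => ∫ x in (0:ℝ)..u, Complex.exp (Complex.I * (c:ℂ) * x) * V x
      with hgdef
  have hcR : Continuous fun x : ℝ => (x:ℂ) := Complex.continuous_ofReal
  have hfc : Continuous fun x : ℝ => Complex.exp (Complex.I * (c:ℂ) * x) * V x :=
    (Complex.continuous_exp.comp (continuous_const.mul hcR)).mul hVcont
  have hg : ∀ t : ℝ, HasDerivAt g (Complex.exp (Complex.I * (c:ℂ) * t) * V t) t :=
    fun t => (hfc.integral_hasStrictDerivAt 0 t).hasDerivAt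
  set W : ℝ → ℂ := fun t => Complex.exp (-(Complex.I * (c:ℂ)) * t) * g t with hWdef
  have hWcont : Continuous W :=
    (Complex.continuous_exp.comp (continuous_const.mul hcR)).mul
      (intervalIntegral.continuous_primitive (fun a b => hfc.intervalIntegrable a b) 0)
  have hWeq : ∀ t : ℝ, W t = ∫ s in (0:ℝ)..t,
      Complex.exp (-(Complex.I * (c:ℂ) * ((t:ℂ) - (s:ℂ)))) * V s := by
    intro t
    rw [hWdef]
    simp only
    rw [← intervalIntegral.integral_const_mul]
    refine intervalIntegral.integral_congr fun s _ => ?_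
    rw [← mul_assoc, ← Complex.exp_add]
    congr 2
    ring
  have hwe : ∀ t ∈ Icc (0:ℝ) T, w t = W t := by
    intro t ht
    rw [hw t, hWeq t]
    refine intervalIntegral.integral_congr fun s hs => ?_
    rw [uIcc_of_le ht.1] at hs
    have hs' : s ∈ Icc (0:ℝ) T := ⟨hs.1, hs.2.trans ht.2⟩
    rw [hVeq s hs']
  -- derivative of W
  have hWd : ∀ t : ℝ, HasDerivAt W (V t - Complex.I * (c:ℂ) * W t) t := by
    intro t
    have h := ((hexp (-(Complex.I * (c:ℂ))) t).mul (hg t))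
    have hone : Complex.exp (-(Complex.I * (c:ℂ)) * t) *
        Complex.exp (Complex.I * (c:ℂ) * t) = 1 := by
      rw [← Complex.exp_add, show -(Complex.I * (c:ℂ)) * (t:ℂ) +
        Complex.I * (c:ℂ) * (t:ℂ) = 0 by ring, Complex.exp_zero]
    have hval : -(Complex.I * (c:ℂ)) * Complex.exp (-(Complex.I * (c:ℂ)) * t) * g t +
        Complex.exp (-(Complex.I * (c:ℂ)) * t) *
          (Complex.exp (Complex.I * (c:ℂ) * t) * V t)
        = V t - Complex.I * (c:ℂ) * W t := by
      rw [← mul_assoc, hone, one_mul, hWdef]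
      ring
    rw [← hval]
    exact h
  -- identify w'
  have hw'eq : ∀ t ∈ Icc (0:ℝ) T, w' t = v t - Complex.I * (c:ℂ) * w t := by
    intro t ht
    have hdw : HasDerivWithinAt w (V t - Complex.I * (c:ℂ) * W t) (Icc 0 T) t :=
      ((hWd t).hasDerivWithinAt).congr (fun x hx => hwe x hx) (hwe t ht)
    have := (uniqueDiffOn_Icc hT t ht).eq_deriv _ (hw' t ht) hdw
    rw [this, hVeq t ht, ← hwe t ht]
  -- interval integrabilities
  have h1 : IntervalIntegrable (fun t => θ' t * v t) volume 0 T :=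
    ContinuousOn.intervalIntegrable (by rw [uIcc_of_le hT']; exact θ'c.mul hv)
  have h2 : IntervalIntegrable (fun t => P t * W t) volume 0 T :=
    (hPcont.mul hWcont).intervalIntegrable 0 T
  -- the kernel K
  set q : ℝ → ℂ := fun t => P t * Complex.exp (-(Complex.I * (c:ℂ)) * t) with hqdef
  have hqc : Continuous q := hPcont.mul (Complex.continuous_exp.comp (continuous_const.mul hcR))
  set H : ℝ → ℂ := fun u => ∫ t in (0:ℝ)..u, q t with hHdef
  have hHcont : Continuous H :=
    intervalIntegral.continuous_primitive (fun a b => hqc.intervalIntegrable a b) 0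
  set K : ℝ → ℂ := fun s => ∫ t in s..T,
      P t * Complex.exp (-(Complex.I * (c:ℂ) * ((t:ℂ) - (s:ℂ)))) with hKdef
  have hK : ∀ s : ℝ, K s = (H T - H s) * Complex.exp (Complex.I * (c:ℂ) * s) := by
    intro s
    rw [hKdef]
    simp only
    have : (fun t => P t * Complex.exp (-(Complex.I * (c:ℂ) * ((t:ℂ) - (s:ℂ)))))
        = fun t => q t * Complex.exp (Complex.I * (c:ℂ) * s) := by
      funext t
      rw [hqdef]
      simp only
      have harg : -(Complex.I * (c:ℂ) * ((t:ℂ)-(s:ℂ)))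
          = -(Complex.I*(c:ℂ))*(t:ℂ) + Complex.I*(c:ℂ)*(s:ℂ) := by ring
      rw [harg, Complex.exp_add, ← mul_assoc]
    rw [this, intervalIntegral.integral_mul_const]
    congr 1
    rw [hHdef]
    simp only
    rw [← intervalIntegral.integral_interval_sub_left (hqc.intervalIntegrable 0 T)
      (hqc.intervalIntegrable 0 s)]
  have hKcont : Continuous K := by
    rw [show K = fun s => (H T - H s) * Complex.exp (Complex.I * (c:ℂ) * s) from funext hK]
    exact ((continuous_const.sub hHcont).mul (Complex.continuous_exp.comp (continuous_const.mul hcR)))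
  have h3 : IntervalIntegrable (fun s => K s * V s) volume 0 T :=
    (hKcont.mul hVcont).intervalIntegrable 0 T
  -- main computation
  calc (∫ t in (0:ℝ)..T, (θ t * w t + θ' t * w' t))
      = ∫ t in (0:ℝ)..T, (θ' t * v t + P t * W t) := by
        refine intervalIntegral.integral_congr fun t ht => ?_
        rw [uIcc_of_le hT'] at ht
        rw [hw'eq t ht, hPeq t ht, ← hwe t ht]
        ring
    _ = (∫ t in (0:ℝ)..T, θ' t * v t) + ∫ t in (0:ℝ)..T, P t * W t :=
        intervalIntegral.integral_add h1 h2
    _ = (∫ t in (0:ℝ)..T, θ' t * v t) + ∫ t in (0:ℝ)..T, ∫ s in (0:ℝ)..t,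
          P t * (Complex.exp (-(Complex.I * (c:ℂ) * ((t:ℂ) - (s:ℂ)))) * V s) := by
        congr 1
        refine intervalIntegral.integral_congr fun t _ => ?_
        rw [hWeq t, ← intervalIntegral.integral_const_mul]
    _ = (∫ t in (0:ℝ)..T, θ' t * v t) + ∫ s in (0:ℝ)..T, ∫ t in s..T,
          P t * (Complex.exp (-(Complex.I * (c:ℂ) * ((t:ℂ) - (s:ℂ)))) * V s) := by
        congr 1
        refine triangle_swap T hT' _ ?_
        apply Continuous.mul (hPcont.comp continuous_fst)
        apply Continuous.mul _ (hVcont.comp continuous_snd)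
        exact Complex.continuous_exp.comp
          ((continuous_const.mul ((hcR.comp continuous_fst).sub
            (hcR.comp continuous_snd))).neg)
    _ = (∫ t in (0:ℝ)..T, θ' t * v t) + ∫ s in (0:ℝ)..T, K s * V s := by
        congr 1
        refine intervalIntegral.integral_congr fun s _ => ?_
        rw [hKdef]
        simp only
        rw [← intervalIntegral.integral_mul_const]
        exact intervalIntegral.integral_congr fun t _ => by ring
    _ = ∫ s in (0:ℝ)..T, (θ' s * v s + K s * V s) :=
        (intervalIntegral.integral_add h1 h3).symm
    _ = ∫ s in (0 : ℝ)..T, v s * (θ' s + ∫ t in s..T,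
          (θ t - Complex.I * (c : ℂ) * θ' t) *
            Complex.exp (-(Complex.I * (c : ℂ) * ((t : ℂ) - (s : ℂ))))) := by
        refine intervalIntegral.integral_congr fun s hs => ?_
        rw [uIcc_of_le hT'] at hs
        have hinner : K s = ∫ t in s..T,
            (θ t - Complex.I * (c : ℂ) * θ' t) *
              Complex.exp (-(Complex.I * (c : ℂ) * ((t : ℂ) - (s : ℂ)))) := by
          rw [hKdef]
          simp only
          refine intervalIntegral.integral_congr fun t ht => ?_
          rw [uIcc_of_le hs.2] at ht
          exact congrArg (· * _) (hPeq t ⟨hs.1.trans ht.1, ht.2⟩)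
        rw [hVeq s hs, hinner]
        ring
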